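/- For every n ≥ 2 and every d ≥ 1: if there exists a sorting network on n channels of depth d, then there exists a sorting network on n channels of depth d whose first layer is F_n = {(2k−1,2k) : 1 ≤ k ≤ ⌊n/2⌋}. -/

import Mathlib

/-- A layer: a set of comparators `(i,j)` with `i < j`, each channel in at most one comparator. -/
def IsLayer {n : ℕ} (L : Finset (Fin n × Fin n)) : Prop :=
  (∀ c ∈ L, c.1 < c.2) ∧
  (∀ c ∈ L, ∀ c' ∈ L, c ≠ c' →
    c.1 ≠ c'.1 ∧ c.1 ≠ c'.2 ∧ c.2 ≠ c'.1 ∧ c.2 ≠ c'.2)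

/-- Apply one layer to a binary vector: the first channel of a comparator receives the
minimum (`&&`), the second the maximum (`||`). -/
noncomputable def applyLayer {n : ℕ} (L : Finset (Fin n × Fin n)) (x : Fin n → Bool) :
    Fin n → Bool := fun k =>
  if h : ∃ j, (k, j) ∈ L then x k && x h.choose
  else if h' : ∃ i, (i, k) ∈ L then x h'.choose || x k
  else x k

/-- Propagate a binary input through the layers of a network (a list of layers). -/
noncomputable def applyNet {n : ℕ} (N : List (Finset (Fin n × Fin n))) (x : Fin n → Bool) :
    Fin n → Bool :=
  N.foldl (fun v L => applyLayer L v) x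

/-- The set of binary outputs of a network. -/
noncomputable def outputs {n : ℕ} (N : List (Finset (Fin n × Fin n))) : Set (Fin n → Bool) :=
  Set.range (applyNet N)

/-- A network sorts all binary inputs. -/
def Sorts {n : ℕ} (N : List (Finset (Fin n × Fin n))) : Prop :=
  ∀ x : Fin n → Bool, Monotone (applyNet N x)

/-- The first layer `F_n`: comparators `(2k-1, 2k)` (0-indexed: `(2k, 2k+1)`). -/
def Fn (n : ℕ) : Finset (Fin n × Fin n) :=
  Finset.univ.filter (fun c => c.1.val % 2 = 0 ∧ c.2.val = c.1.val + 1)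

section Helpers
variable {n : ℕ}

lemma layer_eq_of_share {L : Finset (Fin n × Fin n)} (hL : IsLayer L)
    {c c' : Fin n × Fin n} (hc : c ∈ L) (hc' : c' ∈ L)
    (hsh : c.1 = c'.1 ∨ c.1 = c'.2 ∨ c.2 = c'.1 ∨ c.2 = c'.2) : c = c' := by
  by_contra hne
  obtain ⟨h1, h2, h3, h4⟩ := hL.2 c hc c' hc' hne
  rcases hsh with h | h | h | h <;> [exact h1 h; exact h2 h; exact h3 h; exact h4 h]

lemma isLayer_subset {L L' : Finset (Fin n × Fin n)} (hsub : L' ⊆ L) (hL : IsLayer L) :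
    IsLayer L' :=
  ⟨fun c hc => hL.1 c (hsub hc),
   fun c hc c' hc' hne => hL.2 c (hsub hc) c' (hsub hc') hne⟩

lemma applyLayer_fst {L : Finset (Fin n × Fin n)} (hL : IsLayer L)
    {i j : Fin n} (hij : (i, j) ∈ L) (x : Fin n → Bool) :
    applyLayer L x i = (x i && x j) := by
  have h : ∃ j', (i, j') ∈ L := ⟨j, hij⟩
  have hch : h.choose = j := by
    have hs := h.choose_spec
    have heq := layer_eq_of_share hL hs hij (Or.inl rfl)
    exact (Prod.ext_iff.mp heq).2
  have hdef : applyLayer L x i = (if h : ∃ j, (i, j) ∈ L then x i && x h.choose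
      else if h' : ∃ i', (i', i) ∈ L then x h'.choose || x i else x i) := rfl
  rw [hdef, dif_pos h, hch]

lemma applyLayer_snd {L : Finset (Fin n × Fin n)} (hL : IsLayer L)
    {i j : Fin n} (hij : (i, j) ∈ L) (x : Fin n → Bool) :
    applyLayer L x j = (x i || x j) := by
  have hij' : i < j := hL.1 _ hij
  have h1 : ¬ ∃ j', (j, j') ∈ L := by
    rintro ⟨j', hj'⟩
    have heq := layer_eq_of_share hL hj' hij (Or.inr (Or.inl rfl))
    have : j = i := (Prod.ext_iff.mp heq).1
    exact absurd (this ▸ hij') (lt_irrefl j)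
  have h2 : ∃ i', (i', j) ∈ L := ⟨i, hij⟩
  have hch : h2.choose = i := by
    have hs := h2.choose_spec
    have heq := layer_eq_of_share hL hs hij (Or.inr (Or.inr (Or.inr rfl)))
    exact (Prod.ext_iff.mp heq).1
  have hdef : applyLayer L x j = (if h : ∃ j', (j, j') ∈ L then x j && x h.choose
      else if h' : ∃ i', (i', j) ∈ L then x h'.choose || x j else x j) := rfl
  rw [hdef, dif_neg h1, dif_pos h2, hch]

lemma applyLayer_free {L : Finset (Fin n × Fin n)}
    {k : Fin n} (hk : ¬ ∃ c ∈ L, k = c.1 ∨ k = c.2) (x : Fin n → Bool) :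
    applyLayer L x k = x k := by
  have h1 : ¬ ∃ j', (k, j') ∈ L := by
    rintro ⟨j', hj'⟩; exact hk ⟨(k, j'), hj', Or.inl rfl⟩
  have h2 : ¬ ∃ i', (i', k) ∈ L := by
    rintro ⟨i', hi'⟩; exact hk ⟨(i', k), hi', Or.inr rfl⟩
  have hdef : applyLayer L x k = (if h : ∃ j', (k, j') ∈ L then x k && x h.choose
      else if h' : ∃ i', (i', k) ∈ L then x h'.choose || x k else x k) := rfl
  rw [hdef, dif_neg h1, dif_neg h2]

lemma applyNet_cons (L : Finset (Fin n × Fin n)) (N : List (Finset (Fin n × Fin n)))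
    (x : Fin n → Bool) : applyNet (L :: N) x = applyNet N (applyLayer L x) := rfl

lemma applyNet_nil (x : Fin n → Bool) : applyNet ([] : List (Finset (Fin n × Fin n))) x = x := rfl

end Helpers
section Iot
variable {n : ℕ} {α : Type*} [LinearOrder α]

/-- The involution that swaps the endpoints of every comparator of `L` that is
"reversed" according to the valuation `f`. -/
noncomputable def iot (L : Finset (Fin n × Fin n)) (f : Fin n → α) (i : Fin n) : Fin n :=
  if h : ∃ c, c ∈ L ∧ f c.2 < f c.1 ∧ (i = c.1 ∨ i = c.2) then
    (if i = h.choose.1 then h.choose.2 else h.choose.1)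
  else i

lemma iot_fst {L : Finset (Fin n × Fin n)} (hL : IsLayer L) {f : Fin n → α}
    {i j : Fin n} (hij : (i, j) ∈ L) (hrev : f j < f i) : iot L f i = j := by
  have h : ∃ c, c ∈ L ∧ f c.2 < f c.1 ∧ (i = c.1 ∨ i = c.2) :=
    ⟨(i, j), hij, hrev, Or.inl rfl⟩
  obtain ⟨hc, hcrev, hcsh⟩ := h.choose_spec
  have heq : (i, j) = h.choose := by
    apply layer_eq_of_share hL hij hc
    rcases hcsh with h' | h' <;> simp [← h']
  rw [iot, dif_pos h, ← heq]
  simp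

lemma iot_snd {L : Finset (Fin n × Fin n)} (hL : IsLayer L) {f : Fin n → α}
    {i j : Fin n} (hij : (i, j) ∈ L) (hrev : f j < f i) : iot L f j = i := by
  have hlt : i < j := hL.1 _ hij
  have h : ∃ c, c ∈ L ∧ f c.2 < f c.1 ∧ (j = c.1 ∨ j = c.2) :=
    ⟨(i, j), hij, hrev, Or.inr rfl⟩
  obtain ⟨hc, hcrev, hcsh⟩ := h.choose_spec
  have heq : (i, j) = h.choose := by
    apply layer_eq_of_share hL hij hc
    rcases hcsh with h' | h' <;> simp [← h']
  rw [iot, dif_pos h, ← heq]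
  simp only []
  rw [if_neg (by exact fun hji => absurd (hji ▸ hlt) (lt_irrefl i))]

lemma iot_of_not_rev {L : Finset (Fin n × Fin n)} (hL : IsLayer L) {f : Fin n → α}
    {i j k : Fin n} (hij : (i, j) ∈ L) (hrev : ¬ f j < f i) (hk : k = i ∨ k = j) :
    iot L f k = k := by
  rw [iot, dif_neg]
  rintro ⟨c, hc, hcrev, hcsh⟩
  have heq : (i, j) = c := by
    apply layer_eq_of_share hL hij hc
    rcases hk with rfl | rfl <;> rcases hcsh with h' | h' <;> simp [← h']
  rw [← heq] at hcrev
  exact hrev hcrev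

lemma iot_free {L : Finset (Fin n × Fin n)} {f : Fin n → α}
    {k : Fin n} (hk : ¬ ∃ c ∈ L, k = c.1 ∨ k = c.2) : iot L f k = k := by
  rw [iot, dif_neg]
  rintro ⟨c, hc, _, hcsh⟩
  exact hk ⟨c, hc, hcsh⟩

lemma iot_involutive {L : Finset (Fin n × Fin n)} (hL : IsLayer L) (f : Fin n → α) :
    Function.Involutive (iot L f) := by
  intro k
  by_cases hk : ∃ c ∈ L, k = c.1 ∨ k = c.2
  · obtain ⟨c, hc, hsh⟩ := hk
    by_cases hrev : f c.2 < f c.1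
    · rcases hsh with rfl | rfl
      · rw [iot_fst hL hc hrev, iot_snd hL hc hrev]
      · rw [iot_snd hL hc hrev, iot_fst hL hc hrev]
    · have h1 := iot_of_not_rev hL hc hrev (k := k) (by rcases hsh with rfl | rfl; exact Or.inl rfl; exact Or.inr rfl)
      rw [h1, h1]
  · rw [iot_free hk, iot_free hk]

/-- `iot` as a permutation. -/
noncomputable def iotPerm (L : Finset (Fin n × Fin n)) (hL : IsLayer L) (f : Fin n → α) :
    Equiv.Perm (Fin n) := (iot_involutive hL f).toPerm

@[simp] lemma iotPerm_apply (L : Finset (Fin n × Fin n)) (hL : IsLayer L) (f : Fin n → α)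
    (k : Fin n) : iotPerm L hL f k = iot L f k := rfl

end Iot
section PermRep
variable {n : ℕ}

lemma bool_and_of_le : ∀ a b : Bool, a ≤ b → (a && b) = a := by decide
lemma bool_or_of_le : ∀ a b : Bool, a ≤ b → (a || b) = b := by decide
lemma bool_and_of_lt : ∀ a b : Bool, b < a → (a && b) = b := by decide
lemma bool_or_of_lt : ∀ a b : Bool, b < a → (a || b) = a := by decide

lemma applyLayer_eq_comp {L : Finset (Fin n × Fin n)} (hL : IsLayer L) (x : Fin n → Bool) :
    applyLayer L x = fun k => x (iot L x k) := by
  funext k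
  by_cases hk : ∃ c ∈ L, k = c.1 ∨ k = c.2
  · obtain ⟨c, hc, hsh⟩ := hk
    have hc' : (c.1, c.2) ∈ L := by simpa using hc
    by_cases hrev : x c.2 < x c.1
    · rcases hsh with rfl | rfl
      · rw [applyLayer_fst hL hc' x, iot_fst hL hc' hrev, bool_and_of_lt _ _ hrev]
      · rw [applyLayer_snd hL hc' x, iot_snd hL hc' hrev, bool_or_of_lt _ _ hrev]
    · have hle : x c.1 ≤ x c.2 := not_lt.mp hrev
      rcases hsh with rfl | rfl
      · rw [applyLayer_fst hL hc' x, iot_of_not_rev hL hc' hrev (Or.inl rfl),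
          bool_and_of_le _ _ hle]
      · rw [applyLayer_snd hL hc' x, iot_of_not_rev hL hc' hrev (Or.inr rfl),
          bool_or_of_le _ _ hle]
  · rw [applyLayer_free hk x, iot_free hk]

lemma applyNet_exists_perm : ∀ (N : List (Finset (Fin n × Fin n))),
    (∀ L ∈ N, IsLayer L) → ∀ x : Fin n → Bool,
    ∃ ρ : Equiv.Perm (Fin n), applyNet N x = fun k => x (ρ k) := by
  intro N
  induction N with
  | nil => exact fun _ x => ⟨1, rfl⟩
  | cons L N ih =>
    intro hlay x
    have hL : IsLayer L := hlay L List.mem_cons_self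
    obtain ⟨ρ₂, hρ₂⟩ := ih (fun L' hL' => hlay L' (List.mem_cons_of_mem _ hL'))
      (applyLayer L x)
    refine ⟨ρ₂.trans (iotPerm L hL x), ?_⟩
    rw [applyNet_cons, hρ₂]
    funext k
    rw [applyLayer_eq_comp hL x]
    rfl

end PermRep
section Relabel
variable {n : ℕ}

lemma relabel_isLayer {L : Finset (Fin n × Fin n)} (hL : IsLayer L) (σ : Equiv.Perm (Fin n))
    (horient : ∀ c ∈ L, σ c.1 < σ c.2) :
    IsLayer (L.image fun c => (σ c.1, σ c.2)) := by
  constructor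
  · intro c' hc'
    obtain ⟨c, hc, rfl⟩ := Finset.mem_image.mp hc'
    exact horient c hc
  · intro c' hc' d' hd' hne
    obtain ⟨c, hc, rfl⟩ := Finset.mem_image.mp hc'
    obtain ⟨d, hd, rfl⟩ := Finset.mem_image.mp hd'
    have hcd : c ≠ d := fun h => hne (by rw [h])
    obtain ⟨h1, h2, h3, h4⟩ := hL.2 c hc d hd hcd
    refine ⟨?_, ?_, ?_, ?_⟩ <;> simp only [ne_eq, EmbeddingLike.apply_eq_iff_eq] <;>
      assumption

lemma relabel_apply {L : Finset (Fin n × Fin n)} (hL : IsLayer L) (σ : Equiv.Perm (Fin n))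
    (horient : ∀ c ∈ L, σ c.1 < σ c.2) (x : Fin n → Bool) (k : Fin n) :
    applyLayer (L.image fun c => (σ c.1, σ c.2)) x (σ k) =
      applyLayer L (fun i => x (σ i)) k := by
  have hL' := relabel_isLayer hL σ horient
  by_cases hk : ∃ c ∈ L, k = c.1 ∨ k = c.2
  · obtain ⟨c, hc, hsh⟩ := hk
    have hc' : (c.1, c.2) ∈ L := by simpa using hc
    have himg : (σ c.1, σ c.2) ∈ L.image fun c => (σ c.1, σ c.2) :=
      Finset.mem_image.mpr ⟨c, hc, rfl⟩
    rcases hsh with rfl | rfl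
    · rw [applyLayer_fst hL' himg x, applyLayer_fst hL hc']
    · rw [applyLayer_snd hL' himg x, applyLayer_snd hL hc']
  · have hk' : ¬ ∃ c' ∈ L.image (fun c => (σ c.1, σ c.2)), σ k = c'.1 ∨ σ k = c'.2 := by
      rintro ⟨c', hc'img, hsh'⟩
      obtain ⟨c, hc, rfl⟩ := Finset.mem_image.mp hc'img
      rcases hsh' with h' | h'
      · exact hk ⟨c, hc, Or.inl (σ.injective h')⟩
      · exact hk ⟨c, hc, Or.inr (σ.injective h')⟩
    rw [applyLayer_free hk' x, applyLayer_free hk]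

end Relabel
section LemmaU
variable {n : ℕ}

lemma lemmaU : ∀ (N : List (Finset (Fin n × Fin n))), (∀ L ∈ N, IsLayer L) →
    ∀ π : Equiv.Perm (Fin n),
    ∃ (C : List (Finset (Fin n × Fin n))) (σ : Equiv.Perm (Fin n)),
      (∀ L ∈ C, IsLayer L) ∧ C.length = N.length ∧
      ∀ x : Fin n → Bool, applyNet C x = fun k => applyNet N (fun i => x (π i)) (σ k) := by
  intro N
  induction N with
  | nil =>
    intro _ π
    refine ⟨[], π⁻¹, fun L hL => absurd hL List.not_mem_nil, rfl, fun x => ?_⟩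
    funext k
    simp [applyNet_nil]
  | cons L N₀ ih =>
    intro hlay π
    have hL : IsLayer L := hlay L List.mem_cons_self
    set π₂ : Equiv.Perm (Fin n) := (iotPerm L hL (π : Fin n → Fin n)).trans π with hπ₂
    have hπ₂app : ∀ i, π₂ i = π (iot L (π : Fin n → Fin n) i) := fun i => rfl
    have horient₂ : ∀ c ∈ L, π₂ c.1 < π₂ c.2 := by
      intro c hc
      have hc' : (c.1, c.2) ∈ L := by simpa using hc
      by_cases hrev : π c.2 < π c.1
      · rw [hπ₂app, hπ₂app, iot_fst hL hc' hrev, iot_snd hL hc' hrev]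
        exact hrev
      · rw [hπ₂app, hπ₂app, iot_of_not_rev hL hc' hrev (Or.inl rfl),
          iot_of_not_rev hL hc' hrev (Or.inr rfl)]
        refine lt_of_le_of_ne (not_lt.mp hrev) ?_
        intro h
        exact absurd (π.injective h) (ne_of_lt (hL.1 c hc))
    set L' : Finset (Fin n × Fin n) := L.image fun c => (π₂ c.1, π₂ c.2) with hL'def
    have hL' : IsLayer L' := relabel_isLayer hL π₂ horient₂
    have hswap : ∀ x : Fin n → Bool,
        applyLayer L (fun i => x (π₂ i)) = applyLayer L (fun i => x (π i)) := by
      intro x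
      funext k
      by_cases hk : ∃ c ∈ L, k = c.1 ∨ k = c.2
      · obtain ⟨c, hc, hsh⟩ := hk
        have hc' : (c.1, c.2) ∈ L := by simpa using hc
        by_cases hrev : π c.2 < π c.1
        · have e1 : π₂ c.1 = π c.2 := by rw [hπ₂app, iot_fst hL hc' hrev]
          have e2 : π₂ c.2 = π c.1 := by rw [hπ₂app, iot_snd hL hc' hrev]
          rcases hsh with rfl | rfl
          · rw [applyLayer_fst hL hc', applyLayer_fst hL hc', e1, e2, Bool.and_comm]
          · rw [applyLayer_snd hL hc', applyLayer_snd hL hc', e1, e2, Bool.or_comm]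
        · have e1 : π₂ c.1 = π c.1 := by
            rw [hπ₂app, iot_of_not_rev hL hc' hrev (Or.inl rfl)]
          have e2 : π₂ c.2 = π c.2 := by
            rw [hπ₂app, iot_of_not_rev hL hc' hrev (Or.inr rfl)]
          rcases hsh with rfl | rfl
          · rw [applyLayer_fst hL hc', applyLayer_fst hL hc', e1, e2]
          · rw [applyLayer_snd hL hc', applyLayer_snd hL hc', e1, e2]
      · rw [applyLayer_free hk, applyLayer_free hk, hπ₂app, iot_free hk]
    obtain ⟨C', σ, hC'lay, hC'len, hC'⟩ :=
      ih (fun L'' hL'' => hlay L'' (List.mem_cons_of_mem _ hL'')) π₂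
    refine ⟨L' :: C', σ, ?_, ?_, ?_⟩
    · intro M hM
      rcases List.mem_cons.mp hM with rfl | hM
      · exact hL'
      · exact hC'lay M hM
    · simp [hC'len]
    · intro x
      rw [applyNet_cons, applyNet_cons, hC' (applyLayer L' x)]
      have hy : (fun i => applyLayer L' x (π₂ i)) = applyLayer L (fun i => x (π i)) := by
        funext i
        rw [relabel_apply hL π₂ horient₂ x i]
        exact congrFun (hswap x) i
      rw [hy]

end LemmaU
section SortedFix
variable {n : ℕ}

lemma applyLayer_of_monotone {L : Finset (Fin n × Fin n)} (hL : IsLayer L)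
    {x : Fin n → Bool} (hx : Monotone x) : applyLayer L x = x := by
  funext k
  by_cases hk : ∃ c ∈ L, k = c.1 ∨ k = c.2
  · obtain ⟨c, hc, hsh⟩ := hk
    have hc' : (c.1, c.2) ∈ L := by simpa using hc
    have hle : x c.1 ≤ x c.2 := hx (le_of_lt (hL.1 c hc))
    rcases hsh with rfl | rfl
    · rw [applyLayer_fst hL hc', bool_and_of_le _ _ hle]
    · rw [applyLayer_snd hL hc', bool_or_of_le _ _ hle]
  · exact applyLayer_free hk x

lemma applyNet_of_monotone : ∀ (N : List (Finset (Fin n × Fin n))), (∀ L ∈ N, IsLayer L) →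
    ∀ {x : Fin n → Bool}, Monotone x → applyNet N x = x := by
  intro N
  induction N with
  | nil => exact fun _ _ _ => rfl
  | cons L N₀ ih =>
    intro hlay x hx
    rw [applyNet_cons, applyLayer_of_monotone (hlay L List.mem_cons_self) hx]
    exact ih (fun M hM => hlay M (List.mem_cons_of_mem _ hM)) hx

/-- Number of `true`s in a vector. -/
noncomputable def cnt (x : Fin n → Bool) : ℕ := (Finset.univ.filter (fun i => x i = true)).card

lemma cnt_comp_perm (x : Fin n → Bool) (g : Equiv.Perm (Fin n)) :
    cnt (fun k => x (g k)) = cnt x := by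
  unfold cnt
  apply Finset.card_bij (fun a _ => g a)
  · intro a ha
    simp only [Finset.mem_filter, Finset.mem_univ, true_and] at ha ⊢
    exact ha
  · intro a _ b _ hab
    exact g.injective hab
  · intro b hb
    refine ⟨g⁻¹ b, ?_, by simp⟩
    simp only [Finset.mem_filter, Finset.mem_univ, true_and] at hb ⊢
    simpa using hb

lemma cnt_le (x : Fin n → Bool) : cnt x ≤ n := by
  simpa [cnt] using Finset.card_filter_le Finset.univ (fun i => x i = true)

lemma monotone_char {m : Fin n → Bool} (hm : Monotone m) (i : Fin n) :
    m i = true ↔ n - cnt m ≤ i.val := by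
  constructor
  · intro hi
    have hsub : Finset.Ici i ⊆ Finset.univ.filter (fun j => m j = true) := by
      intro j hj
      simp only [Finset.mem_Ici] at hj
      simp only [Finset.mem_filter, Finset.mem_univ, true_and]
      have hle := hm hj
      rw [hi] at hle
      cases h : m j
      · rw [h] at hle
        exact absurd hle (by simp)
      · rfl
    have hcard := Finset.card_le_card hsub
    rw [Fin.card_Ici] at hcard
    have hcnt : cnt m = (Finset.univ.filter (fun j => m j = true)).card := rfl
    omega
  · intro hi
    by_contra hnot
    have hfalse : m i = false := by
      cases h : m i
      · rfl
      · exact absurd h hnot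
    have hsub : Finset.univ.filter (fun j => m j = true) ⊆ Finset.Ioi i := by
      intro j hj
      simp only [Finset.mem_filter, Finset.mem_univ, true_and] at hj
      simp only [Finset.mem_Ioi]
      by_contra hji
      have := hm (not_lt.mp hji)
      rw [hj, hfalse] at this
      exact absurd this (by simp)
    have hcard := Finset.card_le_card hsub
    rw [Fin.card_Ioi] at hcard
    have hcnt : cnt m = (Finset.univ.filter (fun j => m j = true)).card := rfl
    have : cnt m ≤ n - 1 - i.val := by rw [hcnt]; exact hcard
    have hi2 := i.isLt
    have := cnt_le m
    omega

lemma monotone_eq_of_cnt {m t : Fin n → Bool} (hm : Monotone m) (ht : Monotone t)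
    (hc : cnt m = cnt t) : m = t := by
  funext i
  have h1 := monotone_char hm i
  have h2 := monotone_char ht i
  rw [hc] at h1
  cases h : t i
  · cases h' : m i
    · rfl
    · exact absurd (h1.mp h') (fun hle => by rw [h2.mpr hle] at h; exact Bool.noConfusion h)
  · rw [h1.mpr (h2.mp h)]

end SortedFix
section Extend
variable {n : ℕ}

lemma extend_first_layer {L0 L : Finset (Fin n × Fin n)} (hL : IsLayer L) (hsub : L0 ⊆ L)
    (rest : List (Finset (Fin n × Fin n))) (hs : Sorts (L0 :: rest)) : Sorts (L :: rest) := by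
  have hL0 : IsLayer L0 := isLayer_subset hsub hL
  set D : Finset (Fin n × Fin n) := L \ L0 with hDdef
  have hDsub : D ⊆ L := Finset.sdiff_subset
  have hD : IsLayer D := isLayer_subset hDsub hL
  have hfree0 : ∀ c ∈ D, ∀ k, (k = c.1 ∨ k = c.2) → ¬ ∃ c' ∈ L0, k = c'.1 ∨ k = c'.2 := by
    rintro c hc k hk ⟨c', hc', hk'⟩
    have heq : c = c' := by
      apply layer_eq_of_share hL (hDsub hc) (hsub hc')
      rcases hk with rfl | rfl <;> rcases hk' with h' | h'
      · exact Or.inl h'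
      · exact Or.inr (Or.inl h')
      · exact Or.inr (Or.inr (Or.inl h'))
      · exact Or.inr (Or.inr (Or.inr h'))
    rw [heq] at hc
    exact (Finset.mem_sdiff.mp hc).2 hc'
  have hfreeD : ∀ c ∈ L0, ∀ k, (k = c.1 ∨ k = c.2) → ¬ ∃ c' ∈ D, k = c'.1 ∨ k = c'.2 := by
    rintro c hc k hk ⟨c', hc', hk'⟩
    have heq : c = c' := by
      apply layer_eq_of_share hL (hsub hc) (hDsub hc')
      rcases hk with rfl | rfl <;> rcases hk' with h' | h'
      · exact Or.inl h'
      · exact Or.inr (Or.inl h')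
      · exact Or.inr (Or.inr (Or.inl h'))
      · exact Or.inr (Or.inr (Or.inr h'))
    rw [heq] at hc
    exact (Finset.mem_sdiff.mp hc').2 hc
  have key : ∀ x : Fin n → Bool, applyLayer L x = applyLayer L0 (applyLayer D x) := by
    intro x
    funext k
    by_cases hk : ∃ c ∈ L, k = c.1 ∨ k = c.2
    · obtain ⟨c, hc, hsh⟩ := hk
      have hc' : (c.1, c.2) ∈ L := by simpa using hc
      by_cases hc0 : c ∈ L0
      · have hc0' : (c.1, c.2) ∈ L0 := by simpa using hc0
        have hf1 : applyLayer D x c.1 = x c.1 :=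
          applyLayer_free (hfreeD c hc0 c.1 (Or.inl rfl)) x
        have hf2 : applyLayer D x c.2 = x c.2 :=
          applyLayer_free (hfreeD c hc0 c.2 (Or.inr rfl)) x
        rcases hsh with rfl | rfl
        · rw [applyLayer_fst hL hc', applyLayer_fst hL0 hc0', hf1, hf2]
        · rw [applyLayer_snd hL hc', applyLayer_snd hL0 hc0', hf1, hf2]
      · have hcD : c ∈ D := Finset.mem_sdiff.mpr ⟨hc, hc0⟩
        have hcD' : (c.1, c.2) ∈ D := by simpa using hcD
        have hg1 : ¬ ∃ c' ∈ L0, c.1 = c'.1 ∨ c.1 = c'.2 := hfree0 c hcD c.1 (Or.inl rfl)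
        have hg2 : ¬ ∃ c' ∈ L0, c.2 = c'.1 ∨ c.2 = c'.2 := hfree0 c hcD c.2 (Or.inr rfl)
        rcases hsh with rfl | rfl
        · rw [applyLayer_fst hL hc', applyLayer_free hg1, applyLayer_fst hD hcD']
        · rw [applyLayer_snd hL hc', applyLayer_free hg2, applyLayer_snd hD hcD']
    · have hk0 : ¬ ∃ c ∈ L0, k = c.1 ∨ k = c.2 := by
        rintro ⟨c, hc, h⟩; exact hk ⟨c, hsub hc, h⟩
      have hkD : ¬ ∃ c ∈ D, k = c.1 ∨ k = c.2 := by
        rintro ⟨c, hc, h⟩; exact hk ⟨c, hDsub hc, h⟩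
      rw [applyLayer_free hk, applyLayer_free hk0, applyLayer_free hkD]
  intro x
  rw [applyNet_cons, key, ← applyNet_cons]
  exact hs (applyLayer D x)

end Extend
section PermToFn
variable {n : ℕ}

lemma mem_Fn {c : Fin n × Fin n} : c ∈ Fn n ↔ c.1.val % 2 = 0 ∧ c.2.val = c.1.val + 1 := by
  simp [Fn]

lemma isLayer_Fn : IsLayer (Fn n) := by
  constructor
  · intro c hc
    obtain ⟨h1, h2⟩ := mem_Fn.mp hc
    rw [Fin.lt_def]
    omega
  · intro c hc c' hc' hne
    obtain ⟨h1, h2⟩ := mem_Fn.mp hc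
    obtain ⟨h1', h2'⟩ := mem_Fn.mp hc'
    have hfull : c.1.val ≠ c'.1.val := by
      intro h
      apply hne
      have e1 : c.1 = c'.1 := Fin.ext h
      have e2 : c.2 = c'.2 := Fin.ext (by omega)
      exact Prod.ext e1 e2
    refine ⟨?_, ?_, ?_, ?_⟩ <;> intro heq <;>
      (first | exact hfull (congrArg Fin.val heq) | skip) <;>
      have hv := congrArg Fin.val heq <;> omega
  
lemma tinySwap (S : Finset (Fin n)) (v w a b : Fin n) (hvw : v ≠ w) (hab : a ≠ b)
    (hv : v ∉ S) (hw : w ∉ S) (ha : a ∉ S) (hb : b ∉ S) :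
    ∃ ρ : Equiv.Perm (Fin n), ρ v = a ∧ ρ w = b ∧ ∀ s ∈ S, ρ s = s := by
  set ρ1 := Equiv.swap v a with hρ1
  refine ⟨ρ1.trans (Equiv.swap (ρ1 w) b), ?_, ?_, ?_⟩
  · have h1 : ρ1 v = a := Equiv.swap_apply_left v a
    have h2 : a ≠ ρ1 w := by
      intro h
      by_cases hwa : w = a
      · rw [hwa] at h
        rw [hρ1, Equiv.swap_apply_right] at h
        by_cases hva : v = a
        · exact hvw (hva.trans hwa.symm)
        · exact hva h.symm
      · rw [hρ1, Equiv.swap_apply_of_ne_of_ne hvw.symm hwa] at h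
        exact hwa h.symm
    simp only [Equiv.trans_apply, h1]
    exact Equiv.swap_apply_of_ne_of_ne h2 hab
  · simp only [Equiv.trans_apply]
    exact Equiv.swap_apply_left _ b
  · intro s hs
    have hsv : s ≠ v := fun h => hv (h ▸ hs)
    have hsa : s ≠ a := fun h => ha (h ▸ hs)
    have hsb : s ≠ b := fun h => hb (h ▸ hs)
    have h1 : ρ1 s = s := Equiv.swap_apply_of_ne_of_ne hsv hsa
    have h2 : s ≠ ρ1 w := by
      intro h
      by_cases hwv : w = v
      · exact hvw hwv.symm
      · by_cases hwa : w = a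
        · rw [hρ1, hwa, Equiv.swap_apply_right] at h
          exact hsv h
        · rw [hρ1, Equiv.swap_apply_of_ne_of_ne hwv hwa] at h
          exact hw (h ▸ hs)
    simp only [Equiv.trans_apply, h1]
    exact Equiv.swap_apply_of_ne_of_ne h2 hsb

lemma exists_perm_to_Fn : ∀ (L : Finset (Fin n × Fin n)), IsLayer L →
    ∃ π : Equiv.Perm (Fin n), ∀ c ∈ L, (π c.1, π c.2) ∈ Fn n := by
  intro L
  induction L using Finset.induction_on with
  | empty => exact fun _ => ⟨1, by simp⟩
  | @insert c L' hcnot ih =>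
    intro hins
    have hL' : IsLayer L' := isLayer_subset (Finset.subset_insert _ _) hins
    obtain ⟨π', hπ'⟩ := ih hL'
    set S : Finset (Fin n) :=
      L'.image (fun c' => π' c'.1) ∪ L'.image (fun c' => π' c'.2) with hSdef
    have hSmem : ∀ s ∈ S, ∃ c' ∈ L', s = π' c'.1 ∨ s = π' c'.2 := by
      intro s hs
      rw [hSdef, Finset.mem_union, Finset.mem_image, Finset.mem_image] at hs
      rcases hs with ⟨c', hc', h⟩ | ⟨c', hc', h⟩
      · exact ⟨c', hc', Or.inl h.symm⟩
      · exact ⟨c', hc', Or.inr h.symm⟩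
    have hS1 : ∀ c' ∈ L', π' c'.1 ∈ S := by
      intro c' hc'
      rw [hSdef, Finset.mem_union]
      exact Or.inl (Finset.mem_image.mpr ⟨c', hc', rfl⟩)
    have hS2 : ∀ c' ∈ L', π' c'.2 ∈ S := by
      intro c' hc'
      rw [hSdef, Finset.mem_union]
      exact Or.inr (Finset.mem_image.mpr ⟨c', hc', rfl⟩)
    have hchan : ∀ k, (k = c.1 ∨ k = c.2) → ∀ c' ∈ L', k ≠ c'.1 ∧ k ≠ c'.2 := by
      intro k hk c' hc'
      have hne : c ≠ c' := fun h => hcnot (h ▸ hc')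
      obtain ⟨h1, h2, h3, h4⟩ := hins.2 c (Finset.mem_insert_self _ _) c'
        (Finset.mem_insert_of_mem hc') hne
      rcases hk with rfl | rfl
      · exact ⟨h1, h2⟩
      · exact ⟨h3, h4⟩
    set v := π' c.1 with hvdef
    set w := π' c.2 with hwdef
    have hvS : v ∉ S := by
      intro hv
      obtain ⟨c', hc', h⟩ := hSmem v hv
      rcases h with h | h
      · exact (hchan c.1 (Or.inl rfl) c' hc').1 (π'.injective h)
      · exact (hchan c.1 (Or.inl rfl) c' hc').2 (π'.injective h)
    have hwS : w ∉ S := by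
      intro hw
      obtain ⟨c', hc', h⟩ := hSmem w hw
      rcases h with h | h
      · exact (hchan c.2 (Or.inr rfl) c' hc').1 (π'.injective h)
      · exact (hchan c.2 (Or.inr rfl) c' hc').2 (π'.injective h)
    have hc12 : c.1 ≠ c.2 := ne_of_lt (hins.1 c (Finset.mem_insert_self _ _))
    have hvw : v ≠ w := fun h => hc12 (π'.injective h)
    -- a free slot
    have slotfree : ∀ u : Fin n, u ∉ S → 2 * (u.val / 2) + 1 < n →
        ∃ a b : Fin n, a.val % 2 = 0 ∧ b.val = a.val + 1 ∧ a ∉ S ∧ b ∉ S := by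
      intro u hu hlt
      refine ⟨⟨2 * (u.val / 2), by omega⟩, ⟨2 * (u.val / 2) + 1, hlt⟩,
        (by show (2 * (u.val / 2)) % 2 = 0; omega), rfl, ?_, ?_⟩
      · intro haS
        obtain ⟨c', hc', h⟩ := hSmem _ haS
        have he : (π' c'.1).val % 2 = 0 := (mem_Fn.mp (hπ' c' hc')).1
        have hsucc : (π' c'.2).val = (π' c'.1).val + 1 := (mem_Fn.mp (hπ' c' hc')).2
        have hu2 : u.val = 2 * (u.val / 2) ∨ u.val = 2 * (u.val / 2) + 1 := by omega
        rcases h with h | h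
        · -- a = π' c'.1, partner π' c'.2 has val a+1
          have hval : (π' c'.1).val = 2 * (u.val / 2) := by rw [← h]
          rcases hu2 with h2 | h2
          · exact hu (by
              have : u = π' c'.1 := Fin.ext (by omega)
              exact this ▸ hS1 c' hc')
          · exact hu (by
              have : u = π' c'.2 := Fin.ext (by omega)
              exact this ▸ hS2 c' hc')
        · -- a = π' c'.2 : a even but π' c'.2 odd, contradiction
          have hval : (π' c'.2).val = 2 * (u.val / 2) := by rw [← h]
          omega
      · intro hbS
        obtain ⟨c', hc', h⟩ := hSmem _ hbS
        have he : (π' c'.1).val % 2 = 0 := (mem_Fn.mp (hπ' c' hc')).1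
        have hsucc : (π' c'.2).val = (π' c'.1).val + 1 := (mem_Fn.mp (hπ' c' hc')).2
        have hu2 : u.val = 2 * (u.val / 2) ∨ u.val = 2 * (u.val / 2) + 1 := by omega
        rcases h with h | h
        · -- b = π' c'.1 even, but b odd
          have hval : (π' c'.1).val = 2 * (u.val / 2) + 1 := by rw [← h]
          omega
        · have hval : (π' c'.2).val = 2 * (u.val / 2) + 1 := by rw [← h]
          rcases hu2 with h2 | h2
          · exact hu (by
              have : u = π' c'.1 := Fin.ext (by omega)
              exact this ▸ hS1 c' hc')
          · exact hu (by
              have : u = π' c'.2 := Fin.ext (by omega)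
              exact this ▸ hS2 c' hc')
    have hslot : ∃ a b : Fin n, a.val % 2 = 0 ∧ b.val = a.val + 1 ∧ a ∉ S ∧ b ∉ S := by
      by_cases h : 2 * (v.val / 2) + 1 < n
      · exact slotfree v hvS h
      · have hvn : v.val = n - 1 := by
          have := v.isLt
          omega
        have hwne : w.val ≠ v.val := fun h' => hvw (Fin.ext h'.symm ▸ rfl)
        have hw2 : 2 * (w.val / 2) + 1 < n := by
          have := w.isLt
          have := v.isLt
          omega
        exact slotfree w hwS hw2
    obtain ⟨a, b, haev, hba, haS, hbS⟩ := hslot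
    have hab : a ≠ b := by
      intro h
      have := congrArg Fin.val h
      omega
    obtain ⟨ρ, hρv, hρw, hρS⟩ := tinySwap S v w a b hvw hab hvS hwS haS hbS
    refine ⟨π'.trans ρ, ?_⟩
    intro c'' hc''
    rcases Finset.mem_insert.mp hc'' with rfl | hc''
    · simp only [Equiv.trans_apply]
      rw [← hvdef, ← hwdef, hρv, hρw]
      exact mem_Fn.mpr ⟨haev, hba⟩
    · simp only [Equiv.trans_apply]
      rw [hρS _ (hS1 c'' hc''), hρS _ (hS2 c'' hc'')]
      exact hπ' c'' hc''

end PermToFn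

/-- Parberry's first-layer lemma.
For `n ≥ 2` and `d ≥ 1`, if there is a sorting network on `n` channels of depth `d`,
then there is one of depth `d` whose first layer is `F_n`. -/
theorem statement16 (n d : ℕ) (hn : 2 ≤ n) (hd : 1 ≤ d)
    (h : ∃ N : List (Finset (Fin n × Fin n)),
      (∀ L ∈ N, IsLayer L) ∧ N.length = d ∧ Sorts N) :
    ∃ C : List (Finset (Fin n × Fin n)),
      (∀ L ∈ C, IsLayer L) ∧ (Fn n :: C).length = d ∧ Sorts (Fn n :: C) := by
  obtain ⟨N, hlay, hlen, hsort⟩ := h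
  cases N with
  | nil => rw [List.length_nil] at hlen; omega
  | cons L1 rest =>
    have hL1 : IsLayer L1 := hlay L1 List.mem_cons_self
    have hlayrest : ∀ L ∈ rest, IsLayer L := fun L hL => hlay L (List.mem_cons_of_mem _ hL)
    obtain ⟨π, hπ⟩ := exists_perm_to_Fn L1 hL1
    have horient : ∀ c ∈ L1, π c.1 < π c.2 := by
      intro c hc
      have h1 : (π c.2).val = (π c.1).val + 1 := (mem_Fn.mp (hπ c hc)).2
      rw [Fin.lt_def]
      omega
    set L1' : Finset (Fin n × Fin n) := L1.image (fun c => (π c.1, π c.2)) with hL1'def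
    have hL1'layer : IsLayer L1' := relabel_isLayer hL1 π horient
    obtain ⟨C', σ, hC'lay, hC'len, hU⟩ := lemmaU rest hlayrest π
    have hlays' : ∀ L ∈ L1' :: C', IsLayer L := by
      intro M hM
      rcases List.mem_cons.mp hM with rfl | hM
      · exact hL1'layer
      · exact hC'lay M hM
    have key : ∀ x : Fin n → Bool,
        applyNet (L1' :: C') x = fun k => applyNet (L1 :: rest) (fun i => x (π i)) (σ k) := by
      intro x
      rw [applyNet_cons, hU (applyLayer L1' x), applyNet_cons]
      have hy : (fun i => applyLayer L1' x (π i)) = applyLayer L1 (fun i => x (π i)) := by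
        funext i
        exact relabel_apply hL1 π horient x i
      rw [hy]
    have main : ∀ m : Fin n → Bool, Monotone m → ∀ k, m k = m (σ k) := by
      intro m hm k
      have h1 : applyNet (L1' :: C') m = m := applyNet_of_monotone _ hlays' hm
      have h2 := key m
      obtain ⟨ρ, hρ⟩ := applyNet_exists_perm (L1 :: rest) hlay (fun i => m (π i))
      have ht : Monotone (applyNet (L1 :: rest) (fun i => m (π i))) := hsort _
      have hcnt : cnt (applyNet (L1 :: rest) (fun i => m (π i))) = cnt m := by
        rw [hρ]
        exact cnt_comp_perm m (ρ.trans π)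
      have hteq : applyNet (L1 :: rest) (fun i => m (π i)) = m :=
        monotone_eq_of_cnt ht hm hcnt
      calc m k = applyNet (L1' :: C') m k := (congrFun h1 k).symm
        _ = applyNet (L1 :: rest) (fun i => m (π i)) (σ k) := congrFun h2 k
        _ = m (σ k) := congrFun hteq _
    have hσ : ∀ k, σ k = k := by
      intro k
      have hmono : ∀ j : Fin n, Monotone (fun i => decide (j ≤ i)) := by
        intro j a b hab
        show decide (j ≤ a) ≤ decide (j ≤ b)
        by_cases h : j ≤ a
        · rw [decide_eq_true h, decide_eq_true (le_trans h hab)]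
        · rw [decide_eq_false h]
          exact Bool.false_le _
      have h1 := main _ (hmono k) k
      have h2 := main _ (hmono (σ k)) k
      simp only [decide_eq_true_eq, le_refl, decide_true] at h1 h2
      have ha : k ≤ σ k := of_decide_eq_true h1.symm
      exact le_antisymm h2 ha
    have hsorts0 : Sorts (L1' :: C') := by
      intro x
      rw [key x]
      have hmon := hsort (fun i => x (π i))
      intro a b hab
      simp only [hσ]
      exact hmon hab
    have hsubFn : L1' ⊆ Fn n := by
      intro c' hc'
      obtain ⟨c, hc, rfl⟩ := Finset.mem_image.mp hc'
      exact hπ c hc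
    refine ⟨C', hC'lay, ?_, extend_first_layer isLayer_Fn hsubFn C' hsorts0⟩
    rw [List.length_cons] at hlen ⊢
    omega
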